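/- Let C be a linear code of length n over Z_{p^s} with minimum extended Lee weight d. Then ⌊(d-1)/p^{s-1}⌋ ≤ n - rank(C), where rank(C) is the minimal number of generators of C as a Z_{p^s}-module. -/

import Mathlib

/-- The extended Lee weight on `ZMod (p^s)`. -/
def leeWt (p s : ℕ) (x : ZMod (p ^ s)) : ℕ :=
  if x.val ≤ p ^ s - p ^ (s - 1) then min x.val (p ^ (s - 1)) else p ^ s - x.val

/-- The extended Lee weight of a vector, extended coordinatewise. -/
def leeWtV (p s n : ℕ) (x : Fin n → ZMod (p ^ s)) : ℕ :=
  ∑ i, leeWt p s (x i)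

section Aux

open Submodule

variable {R : Type*} [CommRing R]

/-- Adding a factor of `R` costs at most one extra generator, over a PIR. -/
theorem LeeAux.prodStep [IsPrincipalIdealRing R] {P : Type*} [AddCommGroup P] [Module R P] (m : ℕ)
    (hP : ∀ N : Submodule R P, ∃ S : Finset P, S.card ≤ m ∧ span R (S : Set P) = N)
    (M : Submodule R (P × R)) :
    ∃ S : Finset (P × R), S.card ≤ m + 1 ∧ span R (S : Set (P × R)) = M := by
  classical
  set I : Ideal R := M.map (LinearMap.snd R P R) with hI
  obtain ⟨a, ha⟩ := (IsPrincipalIdealRing.principal I).principal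
  have haI : a ∈ I := by rw [ha]; exact mem_span_singleton_self a
  obtain ⟨g, hgM, hg2⟩ := haI
  set N : Submodule R P := M.comap (LinearMap.inl R P R) with hN
  obtain ⟨S0, hS0card, hS0span⟩ := hP N
  refine ⟨insert g (S0.image (LinearMap.inl R P R)), ?_, ?_⟩
  · calc (insert g (S0.image (LinearMap.inl R P R))).card
        ≤ (S0.image (LinearMap.inl R P R)).card + 1 := Finset.card_insert_le _ _
    _ ≤ S0.card + 1 := by gcongr; exact Finset.card_image_le
    _ ≤ m + 1 := by omega
  · apply le_antisymm
    · rw [span_le]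
      intro x hx
      simp only [Finset.coe_insert, Set.mem_insert_iff, Finset.coe_image, Set.mem_image] at hx
      rcases hx with rfl | ⟨y, hy, rfl⟩
      · exact hgM
      · have : y ∈ N := by rw [← hS0span]; exact subset_span hy
        exact this
    · intro x hx
      have hx2 : x.2 ∈ I := ⟨x, hx, rfl⟩
      rw [ha, mem_span_singleton] at hx2
      obtain ⟨c, hc⟩ := hx2
      have hy : x - c • g ∈ M := M.sub_mem hx (M.smul_mem c hgM)
      have hy2 : (x - c • g).2 = 0 := by
        have hg2s : g.2 = a := hg2
        simp only [Prod.snd_sub, Prod.smul_snd, smul_eq_mul, hg2s, ← hc]; ring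
      have hy1 : (x - c • g).1 ∈ N := by
        show LinearMap.inl R P R (x - c • g).1 ∈ M
        have : LinearMap.inl R P R (x - c • g).1 = x - c • g := by
          ext
          · rfl
          · exact hy2.symm
        rw [this]; exact hy
      have hmem : (x - c • g).1 ∈ span R (S0 : Set P) := by rw [hS0span]; exact hy1
      have h1 : LinearMap.inl R P R (x - c • g).1 ∈
          span R ((insert g (S0.image (LinearMap.inl R P R)) : Finset (P × R)) : Set (P × R)) := by
        have := Submodule.mem_map_of_mem (f := LinearMap.inl R P R) hmem
        rw [Submodule.map_span] at this
        refine span_mono ?_ this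
        intro z hz
        obtain ⟨w, hw, rfl⟩ := hz
        simp only [Finset.coe_insert, Set.mem_insert_iff, Finset.coe_image, Set.mem_image]
        exact Or.inr ⟨w, hw, rfl⟩
      have h2 : LinearMap.inl R P R (x - c • g).1 = x - c • g := by
        ext
        · rfl
        · exact hy2.symm
      rw [h2] at h1
      have hgmem : g ∈ span R
          ((insert g (S0.image (LinearMap.inl R P R)) : Finset (P × R)) : Set (P × R)) :=
        subset_span (by simp)
      have := add_mem h1 (smul_mem _ c hgmem)
      simpa using this

/-- `Fin (m+1) → R` is linearly equivalent to `(Fin m → R) × R`. -/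
def LeeAux.prodEquivFin (R : Type*) [CommRing R] (m : ℕ) :
    (Fin (m + 1) → R) ≃ₗ[R] (Fin m → R) × R where
  toFun f := (fun i => f i.succ, f 0)
  invFun p := Fin.cons p.2 p.1
  map_add' := by intros; rfl
  map_smul' := by intros; rfl
  left_inv f := by
    funext i
    cases i using Fin.cases <;> simp
  right_inv p := by ext i <;> simp

theorem LeeAux.transferSpan {V W : Type*} [AddCommGroup V] [Module R V] [AddCommGroup W]
    [Module R W] (e : V ≃ₗ[R] W) {m : ℕ}
    (h : ∀ N : Submodule R V, ∃ S : Finset V, S.card ≤ m ∧ span R (S : Set V) = N)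
    (M : Submodule R W) : ∃ S : Finset W, S.card ≤ m ∧ span R (S : Set W) = M := by
  classical
  obtain ⟨S, hc, hs⟩ := h (M.comap (e : V →ₗ[R] W))
  refine ⟨S.image e, le_trans Finset.card_image_le hc, ?_⟩
  have : ((S.image e : Finset W) : Set W) = (e : V →ₗ[R] W) '' (S : Set V) := by
    simp [Finset.coe_image]
  rw [this, ← Submodule.map_span, hs,
    Submodule.map_comap_eq, LinearEquiv.range, top_inf_eq]

/-- Over a PIR, every submodule of `Fin m → R` is spanned by at most `m` elements. -/
theorem LeeAux.finGen [IsPrincipalIdealRing R] :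
    ∀ (m : ℕ) (M : Submodule R (Fin m → R)),
      ∃ S : Finset (Fin m → R), S.card ≤ m ∧ span R (S : Set (Fin m → R)) = M := by
  intro m
  induction m with
  | zero =>
    intro M
    refine ⟨∅, by simp, ?_⟩
    have hbot : M = ⊥ := by
      apply le_antisymm _ bot_le
      intro x _
      have hx : x = 0 := Subsingleton.elim _ _
      simp [hx]
    simp [hbot]
  | succ m ih =>
    intro M
    exact LeeAux.transferSpan (LeeAux.prodEquivFin R m).symm
      (fun N => LeeAux.prodStep m ih N) M

/-- Over a PIR, every submodule of `ι → R` is spanned by at most `card ι` elements. -/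
theorem LeeAux.fintypeGen [IsPrincipalIdealRing R] (ι : Type*) [Fintype ι]
    (M : Submodule R (ι → R)) :
    ∃ S : Finset (ι → R), S.card ≤ Fintype.card ι ∧ span R (S : Set (ι → R)) = M :=
  LeeAux.transferSpan (LinearEquiv.funCongrLeft R R (Fintype.equivFin ι))
    (LeeAux.finGen (Fintype.card ι)) M

theorem LeeAux.leeWt_le {p s : ℕ} (hp : 0 < p) [NeZero (p ^ s)] (x : ZMod (p ^ s)) :
    leeWt p s x ≤ p ^ (s - 1) := by
  have h1 : p ^ (s - 1) ≤ p ^ s := Nat.pow_le_pow_right hp (Nat.sub_le s 1)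
  have h2 : x.val < p ^ s := ZMod.val_lt x
  unfold leeWt
  split
  · exact min_le_right _ _
  · omega

theorem LeeAux.leeWt_zero (p s : ℕ) : leeWt p s 0 = 0 := by
  unfold leeWt
  simp

theorem LeeAux.leeWt_pos {p s : ℕ} (hp : 0 < p) [NeZero (p ^ s)] (x : ZMod (p ^ s))
    (hx : x ≠ 0) : 1 ≤ leeWt p s x := by
  have h2 : x.val < p ^ s := ZMod.val_lt x
  have h3 : x.val ≠ 0 := fun h => hx (by rwa [← ZMod.val_eq_zero])
  have h4 : 0 < p ^ (s - 1) := Nat.pow_pos hp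
  unfold leeWt
  split <;> omega

end Aux

/-- MDR-type Singleton bound: if `C` has minimum extended Lee weight `d` and
`rank(C) = r` is the minimal number of generators of `C` as a `ZMod (p^s)`-module,
then `⌊(d-1)/p^(s-1)⌋ ≤ n - rank(C)`. -/
theorem lee_rank_bound (p s n d r : ℕ) (hp : p.Prime) (hs : 1 ≤ s)
    (C : Submodule (ZMod (p ^ s)) (Fin n → ZMod (p ^ s)))
    (hgen : ∃ S : Finset (Fin n → ZMod (p ^ s)),
      S.card = r ∧ Submodule.span (ZMod (p ^ s)) (S : Set (Fin n → ZMod (p ^ s))) = C)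
    (hrmin : ∀ S : Finset (Fin n → ZMod (p ^ s)),
      Submodule.span (ZMod (p ^ s)) (S : Set (Fin n → ZMod (p ^ s))) = C → r ≤ S.card)
    (hex : ∃ c ∈ C, c ≠ 0 ∧ leeWtV p s n c = d)
    (hmin : ∀ c ∈ C, c ≠ 0 → d ≤ leeWtV p s n c) :
    (d - 1) / p ^ (s - 1) + r ≤ n := by
  classical
  haveI : NeZero (p ^ s) := ⟨pow_ne_zero s hp.ne_zero⟩
  haveI : IsPrincipalIdealRing (ZMod (p ^ s)) :=
    IsPrincipalIdealRing.of_surjective (Int.castRingHom (ZMod (p ^ s))) ZMod.intCast_surjective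
  set R := ZMod (p ^ s)
  have hppos : 0 < p := hp.pos
  set q := p ^ (s - 1) with hq
  have hq1 : 1 ≤ q := Nat.one_le_pow _ _ hppos
  set k := (d - 1) / q with hk
  -- every nonzero codeword has Hamming weight > k
  have key : ∀ c : Fin n → R, c ∈ C → c ≠ 0 →
      k < (Finset.univ.filter (fun i => c i ≠ 0)).card := by
    intro c hc hc0
    set T := Finset.univ.filter (fun i => c i ≠ 0) with hT
    have hle : leeWtV p s n c ≤ T.card * q := by
      have h1 : leeWtV p s n c = ∑ i ∈ T, leeWt p s (c i) := by
        unfold leeWtV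
        refine (Finset.sum_subset (Finset.filter_subset _ _) ?_).symm
        intro i _ hi
        have : c i = 0 := by
          by_contra h
          exact hi (Finset.mem_filter.2 ⟨Finset.mem_univ i, h⟩)
        rw [this, LeeAux.leeWt_zero]
      rw [h1]
      calc ∑ i ∈ T, leeWt p s (c i) ≤ ∑ _i ∈ T, q :=
            Finset.sum_le_sum (fun i _ => LeeAux.leeWt_le hppos (c i))
        _ = T.card * q := by rw [Finset.sum_const, smul_eq_mul]
    have hd : d ≤ leeWtV p s n c := hmin c hc hc0
    have hd1 : 1 ≤ d := by
      obtain ⟨c0, hc0C, hc00, hc0w⟩ := hex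
      have : ∃ i, c0 i ≠ 0 := Function.ne_iff.1 hc00
      obtain ⟨i, hi⟩ := this
      have : 1 ≤ leeWtV p s n c0 := by
        unfold leeWtV
        calc 1 ≤ leeWt p s (c0 i) := LeeAux.leeWt_pos hppos _ hi
          _ ≤ ∑ j, leeWt p s (c0 j) :=
            Finset.single_le_sum (f := fun j => leeWt p s (c0 j)) (fun j _ => Nat.zero_le _) (Finset.mem_univ i)
      omega
    have hqk : q * k ≤ d - 1 := by
      rw [hk, mul_comm]
      exact Nat.div_mul_le_self _ _
    have : q * k < q * T.card := by
      calc q * k ≤ d - 1 := hqk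
        _ < d := by omega
        _ ≤ leeWtV p s n c := hd
        _ ≤ T.card * q := hle
        _ = q * T.card := mul_comm _ _
    exact Nat.lt_of_mul_lt_mul_left this
  -- k < n
  have hkn : k < n := by
    obtain ⟨c0, hc0C, hc00, _⟩ := hex
    have h1 := key c0 hc0C hc00
    have h2 : (Finset.univ.filter (fun i => c0 i ≠ 0)).card ≤ n := by
      calc (Finset.univ.filter (fun i => c0 i ≠ 0)).card
          ≤ (Finset.univ : Finset (Fin n)).card := Finset.card_filter_le _ _
        _ = n := Finset.card_univ.trans (Fintype.card_fin n)
    omega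
  -- choose k coordinates to drop
  obtain ⟨K, _, hKcard⟩ := Finset.exists_subset_card_eq (s := (Finset.univ : Finset (Fin n))) (n := k)
    (by simp; omega)
  -- projection to the complement
  set π : (Fin n → R) →ₗ[R] ({ i // i ∈ Kᶜ } → R) :=
    LinearMap.funLeft R R (fun i : { i // i ∈ Kᶜ } => (i : Fin n)) with hπ
  have hinj : ∀ c ∈ C, π c = 0 → c = 0 := by
    intro c hc hc0
    by_contra hne
    have h1 := key c hc hne
    have hsub : (Finset.univ.filter (fun i => c i ≠ 0)) ⊆ K := by
      intro i hi
      have hci : c i ≠ 0 := (Finset.mem_filter.1 hi).2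
      by_contra hiK
      have hicompl : i ∈ Kᶜ := Finset.mem_compl.2 hiK
      have : π c ⟨i, hicompl⟩ = 0 := by rw [hc0]; rfl
      exact hci this
    have : (Finset.univ.filter (fun i => c i ≠ 0)).card ≤ k := by
      rw [← hKcard]; exact Finset.card_le_card hsub
    omega
  -- generators of the projected code
  obtain ⟨S', hS'card, hS'span⟩ := LeeAux.fintypeGen (R := R) { i // i ∈ Kᶜ } (C.map π)
  have hcardcompl : Fintype.card { i // i ∈ Kᶜ } = n - k := by
    rw [Fintype.card_coe, Finset.card_compl, hKcard, Fintype.card_fin]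
  -- choose preimages
  have hpre : ∀ x ∈ S', ∃ y, y ∈ C ∧ π y = x := by
    intro x hx
    have : x ∈ C.map π := by rw [← hS'span]; exact Submodule.subset_span hx
    obtain ⟨y, hy, hyx⟩ := this
    exact ⟨y, hy, hyx⟩
  choose! f hfC hfπ using hpre
  set S := S'.image f with hS
  have hspan : Submodule.span R (S : Set (Fin n → R)) = C := by
    apply le_antisymm
    · rw [Submodule.span_le]
      intro z hz
      simp only [hS, Finset.coe_image, Set.mem_image, Finset.mem_coe] at hz
      obtain ⟨x, hx, rfl⟩ := hz
      exact hfC x hx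
    · intro c hc
      have h1 : π c ∈ Submodule.span R (S' : Set _) := by
        rw [hS'span]; exact Submodule.mem_map_of_mem hc
      have h2 : (S' : Set _) ⊆ π '' (S : Set (Fin n → R)) := by
        intro x hx
        exact ⟨f x, by simp [hS]; exact ⟨x, hx, rfl⟩, hfπ x hx⟩
      have h3 : π c ∈ Submodule.map π (Submodule.span R (S : Set (Fin n → R))) := by
        rw [Submodule.map_span]
        exact Submodule.span_mono h2 h1
      obtain ⟨y, hy, hyc⟩ := h3
      have hyC : y ∈ C := by
        have : Submodule.span R (S : Set (Fin n → R)) ≤ C := by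
          rw [Submodule.span_le]
          intro z hz
          simp only [hS, Finset.coe_image, Set.mem_image, Finset.mem_coe] at hz
          obtain ⟨x, hx, rfl⟩ := hz
          exact hfC x hx
        exact this hy
      have hsub : c - y ∈ C := C.sub_mem hc hyC
      have hπ0 : π (c - y) = 0 := by rw [map_sub, hyc, sub_self]
      have : c - y = 0 := hinj _ hsub hπ0
      have : c = y := by
        have := sub_eq_zero.1 this
        exact this
      rw [this]; exact hy
  have hr : r ≤ S.card := hrmin S hspan
  have hScard : S.card ≤ n - k := by
    calc S.card ≤ S'.card := Finset.card_image_le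
      _ ≤ Fintype.card { i // i ∈ Kᶜ } := hS'card
      _ = n - k := hcardcompl
  omega
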